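/- Suppose n < 2k. Consider the update sequence where the minimum-opinion agent updates at times t = 0,…,k−2 and the maximum-opinion agent updates at times t = k−1,…,2k−3. Then with T = 2k−2, the opinion spread contracts: max_i x_i(T) − min_i x_i(T) ≤ (1 − 1/k)·(max_i x_i(0) − min_i x_i(0)). -/

import Mathlib

open scoped Classical
open Finset

noncomputable def nearList {n : ℕ} (x : Fin n → ℝ) (i : Fin n) : List (Fin n) :=
  @List.insertionSort (Fin n)
    (fun j j' => |x j - x i| < |x j' - x i| ∨ (|x j - x i| = |x j' - x i| ∧ j ≤ j'))
    (Classical.decRel _) (List.finRange n)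

/-- The set of the `k` agents nearest to `i` in opinion distance (ties broken by lower index). -/
noncomputable def nbr {n : ℕ} (k : ℕ) (x : Fin n → ℝ) (i : Fin n) : Finset (Fin n) :=
  ((nearList x i).take k).toFinset

/-- The asynchronous update `f(x,i)`. -/
noncomputable def upd {n : ℕ} (k : ℕ) (x : Fin n → ℝ) (i : Fin n) : Fin n → ℝ :=
  Function.update x i ((∑ j ∈ nbr k x i, x j) / k)

/-- A configuration is clustered if all neighbors of every agent share its opinion. -/
def Clustered {n : ℕ} (k : ℕ) (x : Fin n → ℝ) : Prop :=
  ∀ i : Fin n, ∀ j ∈ nbr k x i, x j = x i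

/-- `μ(x)`: lowest index attaining the minimum. -/
noncomputable def argminIdx {n : ℕ} [NeZero n] (x : Fin n → ℝ) : Fin n :=
  (Finset.univ.filter fun i => ∀ j, x i ≤ x j).min' (by
    obtain ⟨i, -, hi⟩ := Finset.exists_min_image Finset.univ x Finset.univ_nonempty
    exact ⟨i, Finset.mem_filter.mpr ⟨Finset.mem_univ _, fun j => hi j (Finset.mem_univ j)⟩⟩)

/-- `M(x)`: lowest index attaining the maximum. -/
noncomputable def argmaxIdx {n : ℕ} [NeZero n] (x : Fin n → ℝ) : Fin n :=
  argminIdx (fun i => -x i)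

/-- Trajectory of the dynamics with (possibly state-dependent) update selector `σ`. -/
noncomputable def traj {n : ℕ} (k : ℕ) (σ : ℕ → (Fin n → ℝ) → Fin n) (x0 : Fin n → ℝ) :
    ℕ → Fin n → ℝ
  | 0 => x0
  | t + 1 => upd k (traj k σ x0 t) (σ t (traj k σ x0 t))


section AuxNbr
variable {n : ℕ}

lemma insertionSort_congr {α : Type*} (r : α → α → Prop) (d1 d2 : DecidableRel r)
    (l : List α) : @List.insertionSort α r d1 l = @List.insertionSort α r d2 l := by
  congr

lemma nearList_eq (x : Fin n → ℝ) (i : Fin n) :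
    nearList x i = List.insertionSort
      (fun j j' => |x j - x i| < |x j' - x i| ∨ (|x j - x i| = |x j' - x i| ∧ j ≤ j'))
      (List.finRange n) := insertionSort_congr _ _ _ _

lemma nearList_perm (x : Fin n → ℝ) (i : Fin n) : (nearList x i).Perm (List.finRange n) := by
  rw [nearList_eq]; exact List.perm_insertionSort _ _

lemma nearList_nodup (x : Fin n → ℝ) (i : Fin n) : (nearList x i).Nodup :=
  (nearList_perm x i).nodup_iff.mpr (List.nodup_finRange n)

lemma nearList_length (x : Fin n → ℝ) (i : Fin n) : (nearList x i).length = n := by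
  rw [(nearList_perm x i).length_eq, List.length_finRange]

lemma nbr_card {k : ℕ} (hk : k ≤ n) (x : Fin n → ℝ) (i : Fin n) : (nbr k x i).card = k := by
  rw [nbr, List.toFinset_card_of_nodup ((nearList_nodup x i).sublist (List.take_sublist _ _))]
  rw [List.length_take, nearList_length, min_eq_left hk]

lemma nearList_sorted (x : Fin n → ℝ) (i : Fin n) :
    (nearList x i).Pairwise
      (fun j j' => |x j - x i| < |x j' - x i| ∨ (|x j - x i| = |x j' - x i| ∧ j ≤ j')) := by
  set r : Fin n → Fin n → Prop :=
    fun j j' => |x j - x i| < |x j' - x i| ∨ (|x j - x i| = |x j' - x i| ∧ j ≤ j') with hr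
  haveI : IsTotal (Fin n) r := by
    constructor
    intro a b
    rcases lt_trichotomy (|x a - x i|) (|x b - x i|) with h | h | h
    · exact Or.inl (Or.inl h)
    · rcases le_total a b with hab | hab
      · exact Or.inl (Or.inr ⟨h, hab⟩)
      · exact Or.inr (Or.inr ⟨h.symm, hab⟩)
    · exact Or.inr (Or.inl h)
  haveI : IsTrans (Fin n) r := by
    constructor
    rintro a b c (h1 | ⟨h1, h1'⟩) (h2 | ⟨h2, h2'⟩)
    · exact Or.inl (h1.trans h2)
    · exact Or.inl (h2 ▸ h1)
    · exact Or.inl (h1 ▸ h2)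
    · exact Or.inr ⟨h1.trans h2, h1'.trans h2'⟩
  rw [nearList_eq]
  exact List.pairwise_insertionSort r _

lemma nbr_dist_le {k : ℕ} (x : Fin n → ℝ) (i : Fin n) {j j' : Fin n}
    (hj : j ∈ nbr k x i) (hj' : j' ∉ nbr k x i) :
    |x j - x i| ≤ |x j' - x i| := by
  have hsort := nearList_sorted x i
  have hsplit := List.take_append_drop k (nearList x i)
  rw [← hsplit, List.pairwise_append] at hsort
  have hjmem : j ∈ (nearList x i).take k := List.mem_toFinset.mp hj
  have hj'mem : j' ∈ nearList x i := by
    rw [(nearList_perm x i).mem_iff]; exact List.mem_finRange j'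
  have hj'drop : j' ∈ (nearList x i).drop k := by
    rw [← hsplit, List.mem_append] at hj'mem
    rcases hj'mem with h | h
    · exact absurd (List.mem_toFinset.mpr h) hj'
    · exact h
  rcases hsort.2.2 j hjmem j' hj'drop with h | ⟨h, -⟩
  · exact le_of_lt h
  · exact le_of_eq h

end AuxNbr

section AuxMain
variable {n : ℕ}

lemma argminIdx_le [NeZero n] (x : Fin n → ℝ) (j : Fin n) : x (argminIdx x) ≤ x j := by
  have h : argminIdx x ∈ Finset.univ.filter fun i => ∀ j, x i ≤ x j := Finset.min'_mem _ _
  exact (Finset.mem_filter.mp h).2 j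

lemma le_argmaxIdx [NeZero n] (x : Fin n → ℝ) (j : Fin n) : x j ≤ x (argmaxIdx x) := by
  have h := argminIdx_le (fun i => -x i) j
  simpa [argmaxIdx] using h

lemma nbr_bot {k : ℕ} [NeZero n] (x : Fin n → ℝ) {j j' : Fin n}
    (hj : j ∈ nbr k x (argminIdx x)) (hj' : j' ∉ nbr k x (argminIdx x)) : x j ≤ x j' := by
  have h := nbr_dist_le x (argminIdx x) hj hj'
  rw [abs_of_nonneg (sub_nonneg.mpr (argminIdx_le x j)),
    abs_of_nonneg (sub_nonneg.mpr (argminIdx_le x j'))] at h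
  linarith

lemma nbr_top {k : ℕ} [NeZero n] (x : Fin n → ℝ) {j j' : Fin n}
    (hj : j ∈ nbr k x (argmaxIdx x)) (hj' : j' ∉ nbr k x (argmaxIdx x)) : x j' ≤ x j := by
  have h := nbr_dist_le x (argmaxIdx x) hj hj'
  rw [abs_of_nonpos (sub_nonpos.mpr (le_argmaxIdx x j)),
    abs_of_nonpos (sub_nonpos.mpr (le_argmaxIdx x j'))] at h
  linarith

/-- Exchange lemma: a "bottom" set minimizes the sum among sets of the same size. -/
lemma exchange_le {x : Fin n → ℝ} {N L : Finset (Fin n)} (hcard : N.card = L.card)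
    (hbot : ∀ j ∈ N, ∀ j' ∉ N, x j ≤ x j') :
    ∑ j ∈ N, x j ≤ ∑ j ∈ L, x j := by
  have hN : ∑ j ∈ N \ L, x j + ∑ j ∈ N ∩ L, x j = ∑ j ∈ N, x j := by
    rw [← Finset.sdiff_inter_self_left N L]; exact Finset.sum_sdiff Finset.inter_subset_left
  have hL : ∑ j ∈ L \ N, x j + ∑ j ∈ L ∩ N, x j = ∑ j ∈ L, x j := by
    rw [← Finset.sdiff_inter_self_left L N]; exact Finset.sum_sdiff Finset.inter_subset_left
  have hcc : (N \ L).card = (L \ N).card := by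
    have h1 := Finset.card_inter_add_card_sdiff N L
    have h2 := Finset.card_inter_add_card_sdiff L N
    rw [Finset.inter_comm] at h2
    omega
  have key : ∑ j ∈ N \ L, x j ≤ ∑ j ∈ L \ N, x j := by
    rcases Finset.eq_empty_or_nonempty (L \ N) with he | hne
    · have : N \ L = ∅ := Finset.card_eq_zero.mp (by rw [hcc, he, Finset.card_empty])
      rw [this, he]
    · obtain ⟨j0, hj0mem, hj0min⟩ := Finset.exists_min_image (L \ N) x hne
      have h1 : ∑ j ∈ N \ L, x j ≤ (N \ L).card • x j0 := by
        rw [← Finset.sum_const]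
        refine Finset.sum_le_sum fun j hj => ?_
        exact hbot j (Finset.sdiff_subset hj) j0 (Finset.mem_sdiff.mp hj0mem).2
      have h2 : (L \ N).card • x j0 ≤ ∑ j ∈ L \ N, x j := by
        rw [← Finset.sum_const]
        exact Finset.sum_le_sum fun j hj => hj0min j hj
      rw [hcc] at h1
      exact h1.trans h2
  rw [Finset.inter_comm L N] at hL
  linarith

lemma avg_le {k : ℕ} (hk : 1 ≤ k) {A : Finset (Fin n)} (hA : A.card = k) {x : Fin n → ℝ} {C : ℝ}
    (h : ∀ j ∈ A, x j ≤ C) : (∑ j ∈ A, x j) / k ≤ C := by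
  have hkpos : (0:ℝ) < k := by exact_mod_cast hk
  rw [div_le_iff₀ hkpos]
  calc ∑ j ∈ A, x j ≤ ∑ _j ∈ A, C := Finset.sum_le_sum h
    _ = k * C := by rw [Finset.sum_const, hA, nsmul_eq_mul]
    _ = C * k := mul_comm _ _

lemma le_avg {k : ℕ} (hk : 1 ≤ k) {A : Finset (Fin n)} (hA : A.card = k) {x : Fin n → ℝ} {C : ℝ}
    (h : ∀ j ∈ A, C ≤ x j) : C ≤ (∑ j ∈ A, x j) / k := by
  have hkpos : (0:ℝ) < k := by exact_mod_cast hk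
  rw [le_div_iff₀ hkpos]
  calc C * k = k * C := mul_comm _ _
    _ = ∑ _j ∈ A, C := by rw [Finset.sum_const, hA, nsmul_eq_mul]
    _ ≤ ∑ j ∈ A, x j := Finset.sum_le_sum h

lemma upd_apply_ne {k : ℕ} (x : Fin n → ℝ) (i j : Fin n) (h : j ≠ i) :
    upd k x i j = x j := Function.update_of_ne h _ _

lemma upd_apply_self {k : ℕ} (x : Fin n → ℝ) (i : Fin n) :
    upd k x i i = (∑ j ∈ nbr k x i, x j) / k := Function.update_self _ _ _

end AuxMain

lemma exchange_ge {n : ℕ} {x : Fin n → ℝ} {N L : Finset (Fin n)} (hcard : N.card = L.card)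
    (htop : ∀ j ∈ N, ∀ j' ∉ N, x j' ≤ x j) :
    ∑ j ∈ L, x j ≤ ∑ j ∈ N, x j := by
  have h := exchange_le (x := fun j => -x j) hcard (fun j hj j' hj' => neg_le_neg (htop j hj j' hj'))
  simp only [Finset.sum_neg_distrib, neg_le_neg_iff] at h
  exact h

/-- STATEMENT 11 the shrinking sequence (minimum agent updates for `t = 0,…,k-2`, then the
maximum agent for `t = k-1,…,2k-3`) contracts the opinion spread by `1 - 1/k`. -/
theorem shrinking_sequence {n k : ℕ} [NeZero n] (hk : 1 ≤ k) (hkn : k ≤ n)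
    (hnk : n < 2 * k) (x0 : Fin n → ℝ) (X : ℕ → Fin n → ℝ)
    (hX : X = traj k (fun t x => if t < k - 1 then argminIdx x else argmaxIdx x) x0) :
    sSup (Set.range (X (2 * k - 2))) - sInf (Set.range (X (2 * k - 2))) ≤
      (1 - 1 / (k : ℝ)) * (sSup (Set.range x0) - sInf (Set.range x0)) := by
  set σ : ℕ → (Fin n → ℝ) → Fin n :=
    fun t x => if t < k - 1 then argminIdx x else argmaxIdx x with hσ
  have hstep : ∀ t, X (t + 1) = upd k (X t) (σ t (X t)) := fun t => by rw [hX]; rfl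
  have hX0 : X 0 = x0 := by rw [hX]; rfl
  have hk0 : (0 : ℝ) < k := by exact_mod_cast hk
  set M0 := sSup (Set.range x0) with hM0def
  set m0 := sInf (Set.range x0) with hm0def
  have hM0 : ∀ j, x0 j ≤ M0 := fun j => le_csSup (Set.finite_range x0).bddAbove ⟨j, rfl⟩
  have hm0 : ∀ j, m0 ≤ x0 j := fun j => csInf_le (Set.finite_range x0).bddBelow ⟨j, rfl⟩
  set B0 := nbr k x0 (argminIdx x0) with hB0
  have hB0card : B0.card = k := nbr_card hkn x0 _
  set s : ℝ := (∑ j ∈ B0, x0 j) / k with hs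
  set c : ℝ := (∑ j ∈ B0, x0 j) - ((k : ℝ) - 1) * m0 with hc
  have hks : (k : ℝ) * s = ∑ j ∈ B0, x0 j := by rw [hs]; field_simp
  have hcast : ((k - 1 : ℕ) : ℝ) = (k : ℝ) - 1 := by
    push_cast [Nat.cast_sub hk]; ring
  -- Phase 1 invariant
  have phase1 : ∀ t, t ≤ k - 1 →
      (∀ j, x0 j ≤ X t j) ∧ (∀ j, X t j ≤ M0) ∧
      k ≤ (Finset.univ.filter fun j => X t j ≤ c).card ∧
      (Finset.univ.filter fun j => X t j < s).card ≤ k - 1 - t := by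
    intro t
    induction t with
    | zero =>
      intro _
      refine ⟨fun j => by rw [hX0], fun j => by rw [hX0]; exact hM0 j, ?_, ?_⟩
      · have hsub : B0 ⊆ Finset.univ.filter fun j => X 0 j ≤ c := by
          intro j hj
          rw [Finset.mem_filter]
          refine ⟨Finset.mem_univ _, ?_⟩
          rw [hX0]
          have h3 := Finset.sum_erase_add B0 x0 hj
          have h2 : ∑ _j' ∈ B0.erase j, m0 ≤ ∑ j' ∈ B0.erase j, x0 j' :=
            Finset.sum_le_sum fun j' _ => hm0 j'
          rw [Finset.sum_const, Finset.card_erase_of_mem hj, hB0card, nsmul_eq_mul, hcast] at h2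
          rw [hc]; linarith
        calc k = B0.card := hB0card.symm
          _ ≤ _ := Finset.card_le_card hsub
      · obtain ⟨jstar, hjstarB, hjstar⟩ : ∃ j ∈ B0, s ≤ x0 j := by
          by_contra h
          push_neg at h
          have hne : B0.Nonempty := Finset.card_pos.mp (by omega)
          have hlt : ∑ j ∈ B0, x0 j < ∑ _j ∈ B0, s :=
            Finset.sum_lt_sum_of_nonempty hne h
          rw [Finset.sum_const, hB0card, nsmul_eq_mul] at hlt
          linarith
        have hsub : (Finset.univ.filter fun j => X 0 j < s) ⊆ B0.erase jstar := by
          intro j hj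
          rw [Finset.mem_filter, hX0] at hj
          have hjB : j ∈ B0 := by
            by_contra hjB
            exact absurd (nbr_bot x0 hjstarB hjB) (by linarith [hj.2])
          refine Finset.mem_erase.mpr ⟨?_, hjB⟩
          rintro rfl
          exact absurd hjstar (not_le.mpr hj.2)
        calc (Finset.univ.filter fun j => X 0 j < s).card
            ≤ (B0.erase jstar).card := Finset.card_le_card hsub
          _ = k - 1 - 0 := by rw [Finset.card_erase_of_mem hjstarB, hB0card]; omega
    | succ t ih =>
      intro ht
      obtain ⟨ih1, ih2, ih3, ih4⟩ := ih (by omega)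
      have hσt : σ t (X t) = argminIdx (X t) := by
        have : t < k - 1 := by omega
        simp [hσ, this]
      have hupd : X (t + 1) = upd k (X t) (argminIdx (X t)) := by rw [hstep t, hσt]
      set m := argminIdx (X t) with hm
      set N := nbr k (X t) m with hN
      have hNcard : N.card = k := nbr_card hkn (X t) m
      set v : ℝ := (∑ j ∈ N, X t j) / k with hv
      have hval : ∀ j, X (t + 1) j = if j = m then v else X t j := by
        intro j
        rw [hupd, upd, Function.update_apply]
      have hv_le_c : v ≤ c := by
        obtain ⟨L, hLsub, hLcard⟩ := Finset.exists_subset_card_eq ih3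
        have h1 : ∑ j ∈ N, X t j ≤ ∑ j ∈ L, X t j :=
          exchange_le (by rw [hNcard, hLcard]) (fun j hj j' hj' => nbr_bot (X t) hj hj')
        have h2 : (∑ j ∈ L, X t j) / k ≤ c :=
          avg_le hk hLcard fun j hj => (Finset.mem_filter.mp (hLsub hj)).2
        have h3 : v ≤ (∑ j ∈ L, X t j) / k := by rw [hv]; gcongr
        linarith
      have hs_le_v : s ≤ v := by
        have h1 : ∑ j ∈ B0, x0 j ≤ ∑ j ∈ N, x0 j :=
          exchange_le (by rw [hB0card, hNcard]) (fun j hj j' hj' => nbr_bot x0 hj hj')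
        have h2 : ∑ j ∈ N, x0 j ≤ ∑ j ∈ N, X t j := Finset.sum_le_sum fun j _ => ih1 j
        rw [hs, hv]
        gcongr
        linarith
      have hv_le_M0 : v ≤ M0 := avg_le hk hNcard fun j _ => ih2 j
      have hym_le_v : X t m ≤ v := le_avg hk hNcard fun j _ => argminIdx_le (X t) j
      refine ⟨?_, ?_, ?_, ?_⟩
      · intro j
        rw [hval j]
        split
        · next h => rw [h]; exact (ih1 m).trans hym_le_v
        · exact ih1 j
      · intro j
        rw [hval j]
        split
        · exact hv_le_M0
        · exact ih2 j
      · have hsub : (Finset.univ.filter fun j => X t j ≤ c) ⊆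
            Finset.univ.filter fun j => X (t + 1) j ≤ c := by
          intro j hj
          rw [Finset.mem_filter] at hj ⊢
          refine ⟨Finset.mem_univ _, ?_⟩
          rw [hval j]
          split
          · exact hv_le_c
          · exact hj.2
        exact ih3.trans (Finset.card_le_card hsub)
      · have hsub : (Finset.univ.filter fun j => X (t + 1) j < s) ⊆
            (Finset.univ.filter fun j => X t j < s).erase m := by
          intro j hj
          rw [Finset.mem_filter] at hj
          rw [hval j] at hj
          rcases hj with ⟨-, hj2⟩
          by_cases h : j = m
          · rw [if_pos h] at hj2; linarith
          · rw [if_neg h] at hj2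
            exact Finset.mem_erase.mpr ⟨h, Finset.mem_filter.mpr ⟨Finset.mem_univ _, hj2⟩⟩
        rcases Finset.eq_empty_or_nonempty (Finset.univ.filter fun j => X t j < s) with he | hne
        · have : (Finset.univ.filter fun j => X (t + 1) j < s).card = 0 := by
            rw [Finset.card_eq_zero]
            apply Finset.eq_empty_of_forall_notMem
            intro j hj
            have := hsub hj
            rw [he] at this
            simp at this
          omega
        · obtain ⟨j0, hj0⟩ := hne
          rw [Finset.mem_filter] at hj0
          have hmmem : m ∈ Finset.univ.filter fun j => X t j < s :=
            Finset.mem_filter.mpr ⟨Finset.mem_univ _,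
              lt_of_le_of_lt (argminIdx_le (X t) j0) hj0.2⟩
          have h1 := Finset.card_le_card hsub
          rw [Finset.card_erase_of_mem hmmem] at h1
          omega
  obtain ⟨h1a, h1b, h1c, h1d⟩ := phase1 (k - 1) le_rfl
  have hys : ∀ j, s ≤ X (k - 1) j := by
    intro j
    by_contra h
    push_neg at h
    have h1 : 0 < (Finset.univ.filter fun j' => X (k - 1) j' < s).card :=
      Finset.card_pos.mpr ⟨j, Finset.mem_filter.mpr ⟨Finset.mem_univ _, h⟩⟩
    omega
  set Mi := argmaxIdx (X (k - 1)) with hMi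
  set T0 := nbr k (X (k - 1)) Mi with hT0
  have hT0card : T0.card = k := nbr_card hkn _ _
  set S : ℝ := (∑ j ∈ T0, X (k - 1) j) / k with hS
  have hkS : (k : ℝ) * S = ∑ j ∈ T0, X (k - 1) j := by rw [hS]; field_simp
  have hSbound : (k : ℝ) * S ≤ ((k : ℝ) - 1) * M0 + c := by
    obtain ⟨j0, hj0T, hj0c⟩ : ∃ j0 ∈ T0, X (k - 1) j0 ≤ c := by
      have hint : (T0 ∩ (Finset.univ.filter fun j => X (k - 1) j ≤ c)).Nonempty := by
        rw [← Finset.card_pos]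
        have hu := Finset.card_union_add_card_inter T0
          (Finset.univ.filter fun j => X (k - 1) j ≤ c)
        have hle : (T0 ∪ Finset.univ.filter fun j => X (k - 1) j ≤ c).card ≤ n := by
          have := Finset.card_le_card
            (Finset.subset_univ (T0 ∪ Finset.univ.filter fun j => X (k - 1) j ≤ c))
          rwa [Finset.card_univ, Fintype.card_fin] at this
        omega
      obtain ⟨j0, hj0⟩ := hint
      rw [Finset.mem_inter, Finset.mem_filter] at hj0
      exact ⟨j0, hj0.1, hj0.2.2⟩
    have h3 := Finset.sum_erase_add T0 (X (k - 1)) hj0T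
    have h4 : ∑ j ∈ T0.erase j0, X (k - 1) j ≤ ((k : ℝ) - 1) * M0 := by
      have h5 : ∑ j ∈ T0.erase j0, X (k - 1) j ≤ ∑ _j ∈ T0.erase j0, M0 :=
        Finset.sum_le_sum fun j _ => h1b j
      rwa [Finset.sum_const, Finset.card_erase_of_mem hj0T, hT0card, nsmul_eq_mul, hcast] at h5
    linarith
  -- Phase 2 invariant
  have phase2 : ∀ u, u ≤ k - 1 →
      (∀ j, s ≤ X (k - 1 + u) j) ∧ (∀ j, X (k - 1 + u) j ≤ X (k - 1) j) ∧
      (Finset.univ.filter fun j => S < X (k - 1 + u) j).card ≤ k - 1 - u := by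
    intro u
    induction u with
    | zero =>
      intro _
      refine ⟨fun j => hys j, fun j => le_refl _, ?_⟩
      obtain ⟨jstar, hjstarT, hjstar⟩ : ∃ j ∈ T0, X (k - 1) j ≤ S := by
        by_contra h
        push_neg at h
        have hne : T0.Nonempty := Finset.card_pos.mp (by omega)
        have hlt : ∑ _j ∈ T0, S < ∑ j ∈ T0, X (k - 1) j :=
          Finset.sum_lt_sum_of_nonempty hne h
        rw [Finset.sum_const, hT0card, nsmul_eq_mul] at hlt
        linarith
      have hsub : (Finset.univ.filter fun j => S < X (k - 1 + 0) j) ⊆ T0.erase jstar := by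
        intro j hj
        rw [Finset.mem_filter, Nat.add_zero] at hj
        have hjT : j ∈ T0 := by
          by_contra hjT
          exact absurd (nbr_top (X (k - 1)) hjstarT hjT) (by linarith [hj.2])
        refine Finset.mem_erase.mpr ⟨?_, hjT⟩
        rintro rfl
        exact absurd hj.2 (not_lt.mpr hjstar)
      calc (Finset.univ.filter fun j => S < X (k - 1 + 0) j).card
          ≤ (T0.erase jstar).card := Finset.card_le_card hsub
        _ = k - 1 - 0 := by rw [Finset.card_erase_of_mem hjstarT, hT0card]; omega
    | succ u ih =>
      intro hu
      obtain ⟨ih1, ih2, ih3⟩ := ih (by omega)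
      have hσt : σ (k - 1 + u) (X (k - 1 + u)) = argmaxIdx (X (k - 1 + u)) := by
        have : ¬(k - 1 + u < k - 1) := by omega
        simp [hσ, this]
      have hupd : X (k - 1 + (u + 1)) = upd k (X (k - 1 + u)) (argmaxIdx (X (k - 1 + u))) := by
        have hidx : k - 1 + (u + 1) = (k - 1 + u) + 1 := rfl
        rw [hidx, hstep (k - 1 + u), hσt]
      set M1 := argmaxIdx (X (k - 1 + u)) with hM1
      set N := nbr k (X (k - 1 + u)) M1 with hN2
      have hNcard : N.card = k := nbr_card hkn _ _
      set v : ℝ := (∑ j ∈ N, X (k - 1 + u) j) / k with hv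
      have hval : ∀ j, X (k - 1 + (u + 1)) j = if j = M1 then v else X (k - 1 + u) j := by
        intro j
        rw [hupd, upd, Function.update_apply]
      have hv_le_S : v ≤ S := by
        have h1 : ∑ j ∈ N, X (k - 1 + u) j ≤ ∑ j ∈ N, X (k - 1) j :=
          Finset.sum_le_sum fun j _ => ih2 j
        have h2 : ∑ j ∈ N, X (k - 1) j ≤ ∑ j ∈ T0, X (k - 1) j :=
          exchange_ge (by rw [hT0card, hNcard]) (fun j hj j' hj' => nbr_top (X (k - 1)) hj hj')
        rw [hv, hS]
        gcongr
        linarith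
      have hs_le_v : s ≤ v := le_avg hk hNcard fun j _ => ih1 j
      have hv_le_max : v ≤ X (k - 1 + u) M1 :=
        avg_le hk hNcard fun j _ => le_argmaxIdx (X (k - 1 + u)) j
      refine ⟨?_, ?_, ?_⟩
      · intro j
        rw [hval j]
        split
        · exact hs_le_v
        · exact ih1 j
      · intro j
        rw [hval j]
        split
        · next h => rw [h]; exact hv_le_max.trans (ih2 M1)
        · exact ih2 j
      · have hsub : (Finset.univ.filter fun j => S < X (k - 1 + (u + 1)) j) ⊆
            (Finset.univ.filter fun j => S < X (k - 1 + u) j).erase M1 := by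
          intro j hj
          rw [Finset.mem_filter] at hj
          rw [hval j] at hj
          rcases hj with ⟨-, hj2⟩
          by_cases h : j = M1
          · rw [if_pos h] at hj2; linarith
          · rw [if_neg h] at hj2
            exact Finset.mem_erase.mpr ⟨h, Finset.mem_filter.mpr ⟨Finset.mem_univ _, hj2⟩⟩
        rcases Finset.eq_empty_or_nonempty
            (Finset.univ.filter fun j => S < X (k - 1 + u) j) with he | hne
        · have : (Finset.univ.filter fun j => S < X (k - 1 + (u + 1)) j).card = 0 := by
            rw [Finset.card_eq_zero]
            apply Finset.eq_empty_of_forall_notMem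
            intro j hj
            have := hsub hj
            rw [he] at this
            simp at this
          omega
        · obtain ⟨j0, hj0⟩ := hne
          rw [Finset.mem_filter] at hj0
          have hmmem : M1 ∈ Finset.univ.filter fun j => S < X (k - 1 + u) j :=
            Finset.mem_filter.mpr ⟨Finset.mem_univ _,
              lt_of_lt_of_le hj0.2 (le_argmaxIdx (X (k - 1 + u)) j0)⟩
          have h1 := Finset.card_le_card hsub
          rw [Finset.card_erase_of_mem hmmem] at h1
          omega
  obtain ⟨h2a, h2b, h2c⟩ := phase2 (k - 1) le_rfl
  have hub : ∀ j, X (k - 1 + (k - 1)) j ≤ S := by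
    intro j
    by_contra h
    push_neg at h
    have h1 : 0 < (Finset.univ.filter fun j' => S < X (k - 1 + (k - 1)) j').card :=
      Finset.card_pos.mpr ⟨j, Finset.mem_filter.mpr ⟨Finset.mem_univ _, h⟩⟩
    omega
  have hidx : 2 * k - 2 = k - 1 + (k - 1) := by omega
  rw [hidx]
  have hsup : sSup (Set.range (X (k - 1 + (k - 1)))) ≤ S :=
    csSup_le (Set.range_nonempty _) (by rintro _ ⟨j, rfl⟩; exact hub j)
  have hinf : s ≤ sInf (Set.range (X (k - 1 + (k - 1)))) :=
    le_csInf (Set.range_nonempty _) (by rintro _ ⟨j, rfl⟩; exact h2a j)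
  have hfin : S - s ≤ (1 - 1 / (k : ℝ)) * (M0 - m0) := by
    have h1 : (1 - 1 / (k : ℝ)) * (M0 - m0) = (((k : ℝ) - 1) * (M0 - m0)) / k := by
      field_simp
    rw [h1, le_div_iff₀ hk0]
    have : (S - s) * k = k * S - k * s := by ring
    rw [this, hks]
    rw [hc] at hSbound
    linarith
  linarith
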